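/- Let F be a field, n ≥ 1 an integer, and A ∈ F^{n×n} a matrix. For any subsets I, J ⊆ {1,...,n}, rank(A) ≥ rank(A[I, {1,...,n}]) + rank(A[{1,...,n}, J]) − rank(A[I, J]). -/

import Mathlib

open Submodule Module Matrix

lemma aux {F V V' : Type*} [Field F] [AddCommGroup V] [Module F V] [AddCommGroup V']
    [Module F V'] [FiniteDimensional F V] (π : V →ₗ[F] V') (U W : Submodule F V) (hWU : W ≤ U) :
    finrank F (U.map π) + finrank F W ≤ finrank F U + finrank F (W.map π) := by
  have hU := LinearMap.finrank_range_add_finrank_ker (π.domRestrict U)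
  have hW := LinearMap.finrank_range_add_finrank_ker (π.domRestrict W)
  rw [LinearMap.range_domRestrict, LinearMap.ker_domRestrict] at hU hW
  have eU : finrank F ((LinearMap.ker π).comap U.subtype) = finrank F ↥(U ⊓ LinearMap.ker π) := by
    rw [← Submodule.finrank_map_subtype_eq U, Submodule.map_comap_subtype]
  have eW : finrank F ((LinearMap.ker π).comap W.subtype) = finrank F ↥(W ⊓ LinearMap.ker π) := by
    rw [← Submodule.finrank_map_subtype_eq W, Submodule.map_comap_subtype]
  have hmono : finrank F ↥(W ⊓ LinearMap.ker π) ≤ finrank F ↥(U ⊓ LinearMap.ker π) :=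
    Submodule.finrank_mono (inf_le_inf_right _ hWU)
  omega

theorem stmt11 (F : Type*) [Field F] (n : ℕ) (hn : 1 ≤ n)
    (A : Matrix (Fin n) (Fin n) F) (I J : Finset (Fin n)) :
    (A.submatrix (fun i : {x // x ∈ I} => i.1) id).rank +
      (A.submatrix id (fun j : {x // x ∈ J} => j.1)).rank ≤
    A.rank + (A.submatrix (fun i : {x // x ∈ I} => i.1) (fun j : {x // x ∈ J} => j.1)).rank := by
  classical
  set ι : {x // x ∈ I} → Fin n := fun i => i.1
  set κ : {x // x ∈ J} → Fin n := fun j => j.1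
  set π : (Fin n → F) →ₗ[F] ({x // x ∈ I} → F) := LinearMap.funLeft F F ι
  set U : Submodule F (Fin n → F) := Submodule.span F (Set.range Aᵀ)
  set W : Submodule F (Fin n → F) := Submodule.span F (Aᵀ '' (Set.range κ))
  have hWU : W ≤ U := Submodule.span_mono (Set.image_subset_range _ _)
  have h1 : A.rank = finrank F U := Matrix.rank_eq_finrank_span_cols A
  have h2 : (A.submatrix ι id).rank = finrank F (U.map π) := by
    have e : Submodule.span F (Set.range (A.submatrix ι id).col) = U.map π := by
      rw [show (A.submatrix ι id).col = ⇑π ∘ A.col from rfl, Set.range_comp, Submodule.span_image]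
      rfl
    rw [Matrix.rank_eq_finrank_span_cols, e]
  have h3 : (A.submatrix id κ).rank = finrank F W := by
    have e : Submodule.span F (Set.range (A.submatrix id κ).col) = W := by
      rw [show (A.submatrix id κ).col = A.col ∘ κ from rfl, Set.range_comp]
      rfl
    rw [Matrix.rank_eq_finrank_span_cols, e]
  have h4 : (A.submatrix ι κ).rank = finrank F (W.map π) := by
    have e : Submodule.span F (Set.range (A.submatrix ι κ).col) = W.map π := by
      rw [show (A.submatrix ι κ).col = ⇑π ∘ (A.col ∘ κ) from rfl, Set.range_comp _ (A.col ∘ κ),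
        Set.range_comp, Submodule.span_image]
      rfl
    rw [Matrix.rank_eq_finrank_span_cols, e]
  rw [h1, h2, h3, h4]
  exact aux π U W hWU
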